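/- Let V ∈ H₊^{−m}. The operator S₊(V) is local: if u ∈ Dom(S₊) vanishes on an open subinterval (α,β) ⊂ [0,1], then S₊(V)u vanishes on (α,β). -/

import Mathlib

/- STATEMENT 10 (locality): For V ∈ H₊^{−m}, if u ∈ Dom(S₊(V))
vanishes a.e. on a subinterval (α,β) ⊂ [0,1], then S₊(V)u vanishes
a.e. on (α,β).  The 1-periodic functions u and S₊u (both in L²) are
realized as L² functions on the circle ℝ/ℤ whose Fourier coefficients
are the sequences û, (S₊u)^; membership u ∈ Dom(S₊) and the action of
S₊ are expressed in Fourier coordinates: û ∈ H₊^m and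
(S₊u)^(k) = (2kπ)^{2m}û(k) + (V̂*û)(k). -/

noncomputable section
open Complex MeasureTheory AddCircle

instance : Fact ((0 : ℝ) < 1) := ⟨one_pos⟩

def wtp (s : ℝ) (k : ℤ) : ℝ := ((1 + |(2 * k : ℤ)| : ℝ)) ^ (2 * s)

def conv (a b : ℤ → ℂ) (k : ℤ) : ℂ := ∑' j : ℤ, a (k - j) * b j

def cplus (m : ℕ) (k : ℤ) : ℝ := (2 * Real.pi * (k : ℝ)) ^ (2 * m)

open scoped FourierTransform Real
open Set Function

section Helpers

lemma haar_integral_eq (φ : AddCircle (1:ℝ) → ℂ) :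
    ∫ t, φ t ∂(@haarAddCircle (1:ℝ) _) = ∫ x in Set.Ioc (0:ℝ) 1, φ ↑x := by
  have h := AddCircle.integral_preimage (1:ℝ) 0 φ
  rw [zero_add] at h
  rw [h, AddCircle.volume_eq_smul_haarAddCircle, ENNReal.ofReal_one, one_smul]

lemma hcs_of_tsupport {α β : ℝ} {f : ℝ → ℂ} (hts : tsupport f ⊆ Set.Ioo α β) :
    HasCompactSupport f :=
  HasCompactSupport.intro isCompact_Icc fun x hx =>
    image_eq_zero_of_notMem_tsupport fun hc => hx (Set.Ioo_subset_Icc_self (hts hc))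

lemma liftIoc_measurable (f : ℝ → ℂ) (hf : Continuous f) :
    Measurable (AddCircle.liftIoc 1 0 f) := by
  have h1 : Measurable fun t : AddCircle (1:ℝ) => ((AddCircle.equivIoc 1 0 t : ℝ)) :=
    measurable_subtype_coe.comp (AddCircle.measurableEquivIoc (1:ℝ) 0).measurable
  exact hf.measurable.comp h1

lemma liftIoc_memLp (f : ℝ → ℂ) (hf : Continuous f) (hcs : HasCompactSupport f) :
    MemLp (AddCircle.liftIoc 1 0 f) 2 (@haarAddCircle (1:ℝ) _) := by
  obtain ⟨C, hC⟩ := hcs.exists_bound_of_continuous hf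
  exact MemLp.of_bound (liftIoc_measurable f hf).aestronglyMeasurable C
    (Filter.Eventually.of_forall fun t => hC _)

lemma fourierCoeff_congr_ae' {f g : AddCircle (1:ℝ) → ℂ}
    (h : f =ᵐ[@haarAddCircle (1:ℝ) _] g) (n : ℤ) : fourierCoeff f n = fourierCoeff g n := by
  unfold fourierCoeff
  exact integral_congr_ae (h.mono fun t ht => by simp only [ht])

lemma fourierCoeff_conj (φ : AddCircle (1:ℝ) → ℂ) (n : ℤ) :
    fourierCoeff (fun t => (starRingEnd ℂ) (φ t)) n
      = (starRingEnd ℂ) (fourierCoeff φ (-n)) := by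
  unfold fourierCoeff
  rw [← integral_conj]
  congr 1
  ext t
  simp only [smul_eq_mul, map_mul, neg_neg]
  rw [← fourier_neg]

lemma tsupport_iteratedDeriv_subset (f : ℝ → ℂ) (n : ℕ) :
    tsupport (iteratedDeriv n f) ⊆ tsupport f := by
  induction n with
  | zero => simp [iteratedDeriv_zero]
  | succ n ih =>
      rw [iteratedDeriv_succ]
      exact (closure_minimal support_deriv_subset (isClosed_tsupport _)).trans ih

lemma hcs_iteratedDeriv {f : ℝ → ℂ} (hcs : HasCompactSupport f) (n : ℕ) :
    HasCompactSupport (iteratedDeriv n f) :=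
  IsCompact.of_isClosed_subset hcs (isClosed_tsupport _) (tsupport_iteratedDeriv_subset f n)

lemma cont_iteratedDeriv {f : ℝ → ℂ} (hf : ContDiff ℝ (⊤ : ℕ∞) f) (n : ℕ) :
    Continuous (iteratedDeriv n f) :=
  hf.continuous_iteratedDeriv n (by exact_mod_cast le_top)

lemma integrable_iteratedDeriv {f : ℝ → ℂ} (hf : ContDiff ℝ (⊤ : ℕ∞) f)
    (hcs : HasCompactSupport f) (n : ℕ) : Integrable (iteratedDeriv n f) :=
  (cont_iteratedDeriv hf n).integrable_of_hasCompactSupport (hcs_iteratedDeriv hcs n)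

lemma FT_iteratedDeriv {f : ℝ → ℂ} (hf : ContDiff ℝ (⊤ : ℕ∞) f)
    (hcs : HasCompactSupport f) (n : ℕ) (ξ : ℝ) :
    𝓕 (iteratedDeriv n f) ξ = (2 * Real.pi * Complex.I * ξ) ^ n • 𝓕 f ξ := by
  rw [Real.fourier_iteratedDeriv hf (fun k _ => integrable_iteratedDeriv hf hcs k)
    (le_top : (n : ℕ∞) ≤ ⊤)]

lemma FT_decay {f : ℝ → ℂ} (hf : ContDiff ℝ (⊤ : ℕ∞) f) (hcs : HasCompactSupport f) (n : ℕ) :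
    ∃ C : ℝ, 0 ≤ C ∧ ∀ ξ : ℝ, ‖𝓕 f ξ‖ * (1 + |ξ|) ^ n ≤ C := by
  set D : ℕ → ℝ := fun j => (2 * Real.pi)⁻¹ ^ j * ∫ x : ℝ, ‖iteratedDeriv j f x‖ with hD
  have hDnn : ∀ j, 0 ≤ D j := fun j =>
    mul_nonneg (by positivity) (integral_nonneg fun x => norm_nonneg _)
  have key : ∀ j : ℕ, ∀ ξ : ℝ, |ξ| ^ j * ‖𝓕 f ξ‖ ≤ D j := by
    intro j ξ
    have h1 : ‖𝓕 (iteratedDeriv j f) ξ‖ ≤ ∫ x : ℝ, ‖iteratedDeriv j f x‖ :=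
      VectorFourier.norm_fourierIntegral_le_integral_norm _ _ _ _ _
    rw [FT_iteratedDeriv hf hcs j ξ, norm_smul] at h1
    have h2 : ‖(2 * (Real.pi:ℂ) * Complex.I * ξ) ^ j‖ = (2 * Real.pi) ^ j * |ξ| ^ j := by
      rw [norm_pow, ← mul_pow]
      congr 1
      simp [norm_mul, Complex.norm_real, Real.norm_eq_abs, Complex.norm_I,
        _root_.abs_of_pos Real.pi_pos]
    rw [h2] at h1
    have t0 : (0:ℝ) ≤ (2 * Real.pi)⁻¹ ^ j := by positivity
    have h4 := mul_le_mul_of_nonneg_left h1 t0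
    have hc : (2 * Real.pi)⁻¹ ^ j * (2 * Real.pi) ^ j = 1 := by
      rw [inv_pow, inv_mul_cancel₀ (pow_ne_zero _ (by positivity))]
    calc |ξ| ^ j * ‖𝓕 f ξ‖
        = (2 * Real.pi)⁻¹ ^ j * ((2 * Real.pi) ^ j * |ξ| ^ j * ‖𝓕 f ξ‖) := by
          rw [show (2 * Real.pi)⁻¹ ^ j * ((2 * Real.pi) ^ j * |ξ| ^ j * ‖𝓕 f ξ‖)
              = ((2 * Real.pi)⁻¹ ^ j * (2 * Real.pi) ^ j) * (|ξ| ^ j * ‖𝓕 f ξ‖) from by ring,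
            hc, one_mul]
      _ ≤ D j := h4
  refine ⟨2 ^ n * (D 0 + D n), by positivity, fun ξ => ?_⟩
  have hnn : (0:ℝ) ≤ ‖𝓕 f ξ‖ := norm_nonneg _
  have h0 : ‖𝓕 f ξ‖ ≤ D 0 := by have := key 0 ξ; simpa using this
  rcases le_total |ξ| 1 with hle | hle
  · have hp : (1 + |ξ|) ^ n ≤ 2 ^ n := by
      apply pow_le_pow_left₀ (by positivity)
      linarith
    calc ‖𝓕 f ξ‖ * (1 + |ξ|) ^ n ≤ D 0 * 2 ^ n :=
          mul_le_mul h0 hp (by positivity) (hDnn 0)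
      _ = 2 ^ n * D 0 := mul_comm _ _
      _ ≤ 2 ^ n * (D 0 + D n) :=
          mul_le_mul_of_nonneg_left (le_add_of_nonneg_right (hDnn n)) (by positivity)
  · have hp : (1 + |ξ|) ^ n ≤ 2 ^ n * |ξ| ^ n := by
      rw [← mul_pow]
      apply pow_le_pow_left₀ (by positivity)
      linarith
    have hkey := key n ξ
    calc ‖𝓕 f ξ‖ * (1 + |ξ|) ^ n ≤ ‖𝓕 f ξ‖ * (2 ^ n * |ξ| ^ n) :=
          mul_le_mul_of_nonneg_left hp hnn
      _ = 2 ^ n * (|ξ| ^ n * ‖𝓕 f ξ‖) := by ring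
      _ ≤ 2 ^ n * (D 0 + D n) :=
          mul_le_mul_of_nonneg_left (hkey.trans (le_add_of_nonneg_left (hDnn 0))) (by positivity)

lemma summable_g : Summable (fun k : ℤ => ((1 + |(k : ℝ)|) ^ 2)⁻¹) := by
  have h1 : Summable (fun n : ℕ => ((n : ℝ) ^ 2)⁻¹) := by
    simpa [one_div] using Real.summable_one_div_nat_pow.mpr one_lt_two
  have h2 : Summable (fun n : ℕ => (((n : ℝ) + 1) ^ 2)⁻¹) := by
    have := (summable_nat_add_iff 1).2 h1
    refine this.congr fun n => ?_
    push_cast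
    ring_nf
  refine Summable.of_nat_of_neg ?_ ?_ <;>
    · refine h2.congr fun n => ?_
      push_cast
      first
      | rw [abs_neg, show |((n:ℝ))| = (n:ℝ) from _root_.abs_of_nonneg (by positivity)]; ring_nf
      | rw [show |((n:ℝ))| = (n:ℝ) from _root_.abs_of_nonneg (by positivity)]; ring_nf

lemma key_zero (X : Lp ℂ 2 (@haarAddCircle (1 : ℝ) _)) {α β : ℝ}
    (hX0 : ∀ᵐ x : ℝ ∂(volume.restrict (Set.Ioo α β)), X (x : AddCircle (1 : ℝ)) = 0)
    (f : ℝ → ℂ) (hts : tsupport f ⊆ Set.Ioo α β) :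
    ∫ x in Set.Ioc (0:ℝ) 1, f x * X ↑x = 0 := by
  have h1 : ∀ᵐ x : ℝ ∂volume, x ∈ Set.Ioo α β → X (x : AddCircle (1:ℝ)) = 0 :=
    (ae_restrict_iff' measurableSet_Ioo).1 hX0
  have h2 : ∀ᵐ x : ℝ ∂volume, f x * X (x : AddCircle (1:ℝ)) = 0 := by
    refine h1.mono fun x hx => ?_
    by_cases hmem : x ∈ Set.Ioo α β
    · rw [hx hmem, mul_zero]
    · rw [image_eq_zero_of_notMem_tsupport fun hc => hmem (hts hc), zero_mul]
  exact integral_eq_zero_of_ae (ae_restrict_of_ae h2)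

-- shift lemma
lemma FT_shift (h : ℝ → ℂ) (l : ℤ) (ξ : ℝ) :
    𝓕 (fun x : ℝ => h x * Complex.exp (2 * Real.pi * l * x * Complex.I)) ξ
      = 𝓕 h (ξ - l) := by
  rw [Real.fourier_eq', Real.fourier_eq']
  congr 1
  ext x
  simp only [RCLike.inner_apply, conj_trivial, smul_eq_mul]
  rw [mul_comm (Complex.exp _) (h x * Complex.exp _), mul_assoc, ← Complex.exp_add]
  ring_nf
  congr 2
  push_cast
  ring

lemma key_integral (X : Lp ℂ 2 (@haarAddCircle (1 : ℝ) _)) {α β : ℝ} (hα : 0 ≤ α) (hβ : β ≤ 1)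
    (f : ℝ → ℂ) (hf : Continuous f) (hts : tsupport f ⊆ Set.Ioo α β) :
    ∫ x in Set.Ioc (0:ℝ) 1, f x * X ↑x
      = ∑' k : ℤ, 𝓕 f (-(k : ℝ)) * fourierCoeff (X : AddCircle (1:ℝ) → ℂ) k := by
  have hsub : Set.Ioo α β ⊆ Set.Ioc (0:ℝ) 1 := fun x hx =>
    ⟨lt_of_le_of_lt hα hx.1, le_trans hx.2.le hβ⟩
  have hzero : ∀ x : ℝ, x ∉ Set.Ioc (0:ℝ) 1 → f x = 0 := fun x hx =>
    image_eq_zero_of_notMem_tsupport fun hc => hx (hsub (hts hc))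
  have hcs : HasCompactSupport f := hcs_of_tsupport hts
  set fc : ℝ → ℂ := fun x => (starRingEnd ℂ) (f x) with hfc
  have hfc_cont : Continuous fc := Complex.continuous_conj.comp hf
  have hfc_cs : HasCompactSupport fc := hcs.comp_left (map_zero _)
  set F : AddCircle (1:ℝ) → ℂ := AddCircle.liftIoc 1 0 f with hF
  set G : AddCircle (1:ℝ) → ℂ := AddCircle.liftIoc 1 0 fc with hG
  have hGF : ∀ t, G t = (starRingEnd ℂ) (F t) := fun t => rfl
  have hGmem : MemLp G 2 (@haarAddCircle (1:ℝ) _) := liftIoc_memLp fc hfc_cont hfc_cs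
  set g2 := hGmem.toLp G with hg2
  have hcoe : (g2 : AddCircle (1:ℝ) → ℂ) =ᵐ[@haarAddCircle (1:ℝ) _] G := hGmem.coeFn_toLp
  -- Fourier coefficients of F
  have hFk : ∀ k : ℤ, fourierCoeff F (-k) = 𝓕 f (-(k:ℝ)) := by
    intro k
    have h1 : fourierCoeff F (-k)
        = ∫ x in Set.Ioc (0:ℝ) 1, fourier k (x : AddCircle (1:ℝ)) • F ↑x := by
      unfold fourierCoeff
      rw [neg_neg]
      exact haar_integral_eq _
    have h2 : ∫ x in Set.Ioc (0:ℝ) 1, fourier k (x : AddCircle (1:ℝ)) • F ↑x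
        = ∫ x in Set.Ioc (0:ℝ) 1, Complex.exp (2 * Real.pi * k * x * Complex.I) • f x := by
      refine setIntegral_congr_fun measurableSet_Ioc fun x hx => ?_
      have hxm : x ∈ Set.Ioc (0:ℝ) (0 + 1) := by rwa [zero_add]
      rw [hF, AddCircle.liftIoc_coe_apply hxm, fourier_coe_apply]
      congr 2
      push_cast
      ring
    have h3 : ∫ x in Set.Ioc (0:ℝ) 1, Complex.exp (2 * Real.pi * k * x * Complex.I) • f x
        = ∫ x : ℝ, Complex.exp (2 * Real.pi * k * x * Complex.I) • f x :=
      setIntegral_eq_integral_of_forall_compl_eq_zero fun x hx => by rw [hzero x hx, smul_zero]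
    have h4 : 𝓕 f (-(k:ℝ)) = ∫ x : ℝ, Complex.exp (2 * Real.pi * k * x * Complex.I) • f x := by
      rw [Real.fourier_eq']
      congr 1
      ext x
      congr 2
      simp only [RCLike.inner_apply, conj_trivial]
      push_cast
      ring
    rw [h1, h2, h3, ← h4]
  have hXk : ∀ (Y : Lp ℂ 2 (@haarAddCircle (1 : ℝ) _)) (k : ℤ),
      (inner ℂ ((@fourierBasis (1:ℝ) _) k) Y : ℂ) = fourierCoeff (Y : AddCircle (1:ℝ) → ℂ) k := by
    intro Y k
    rw [← fourierBasis_repr]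
    exact (HilbertBasis.repr_apply_apply _ _ _).symm
  have hg2k : ∀ k : ℤ, (inner ℂ g2 ((@fourierBasis (1:ℝ) _) k) : ℂ) = 𝓕 f (-(k:ℝ)) := by
    intro k
    have e2 : fourierCoeff (g2 : AddCircle (1:ℝ) → ℂ) k = (starRingEnd ℂ) (𝓕 f (-(k:ℝ))) := by
      rw [fourierCoeff_congr_ae' hcoe k]
      have hGfun : G = fun t => (starRingEnd ℂ) (F t) := funext hGF
      rw [hGfun, fourierCoeff_conj, hFk]
    calc (inner ℂ g2 ((@fourierBasis (1:ℝ) _) k) : ℂ)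
        = (starRingEnd ℂ) (inner ℂ ((@fourierBasis (1:ℝ) _) k) g2) := (inner_conj_symm _ _).symm
      _ = 𝓕 f (-(k:ℝ)) := by rw [hXk g2 k, e2, Complex.conj_conj]
  have hip : (inner ℂ g2 X : ℂ) = ∫ x in Set.Ioc (0:ℝ) 1, f x * X ↑x := by
    rw [MeasureTheory.L2.inner_def]
    have e1 : ∫ t, (inner ℂ (g2 t) (X t) : ℂ) ∂(@haarAddCircle (1:ℝ) _)
        = ∫ t, F t * X t ∂(@haarAddCircle (1:ℝ) _) := by
      refine integral_congr_ae (hcoe.mono fun t ht => ?_)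
      simp only [RCLike.inner_apply, ht, hGF t, Complex.conj_conj]
      exact mul_comm _ _
    rw [e1, haar_integral_eq fun t => F t * X t]
    refine setIntegral_congr_fun measurableSet_Ioc fun x hx => ?_
    have hxm : x ∈ Set.Ioc (0:ℝ) (0 + 1) := by rwa [zero_add]
    rw [hF, AddCircle.liftIoc_coe_apply hxm]
  have P := (@fourierBasis (1:ℝ) _).tsum_inner_mul_inner g2 X
  rw [hip] at P
  rw [← P]
  exact (tsum_congr fun k => by rw [hg2k k, hXk X k]).symm

def shearEquiv : (ℤ × ℤ) ≃ (ℤ × ℤ) :=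
  ⟨fun q => (q.1 + q.2, q.2), fun p => (p.1 - p.2, p.2),
    fun q => by simp, fun p => by simp⟩


lemma main_tsum (m : ℕ) (V u : ℤ → ℂ)
    (hV : Summable fun k : ℤ => wtp (-(m : ℝ)) k * ‖V k‖ ^ 2)
    (hu : Summable fun k : ℤ => wtp (m : ℝ) k * ‖u k‖ ^ 2)
    {α β : ℝ}
    (Tst : ∀ f : ℝ → ℂ, Continuous f → tsupport f ⊆ Set.Ioo α β →
      ∑' k : ℤ, 𝓕 f (-(k : ℝ)) * u k = 0)
    (h : ℝ → ℂ) (hh : ContDiff ℝ (⊤ : ℕ∞) h) (hts : tsupport h ⊆ Set.Ioo α β) :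
    ∑' k : ℤ, 𝓕 h (-(k : ℝ)) * (((cplus m k : ℝ) : ℂ) * u k + conv V u k) = 0 := by
  have hcs : HasCompactSupport h := hcs_of_tsupport hts
  obtain ⟨C, hC0, hCd⟩ := FT_decay hh hcs (2 * m + 2)
  set c : ℝ → ℂ := fun ξ => 𝓕 h ξ with hcdef
  set g : ℤ → ℝ := fun k => ((1 + |(k : ℝ)|) ^ 2)⁻¹ with hgdef
  have hb_pos : ∀ k : ℤ, (0:ℝ) < 1 + |(k:ℝ)| := fun k => by positivity
  have hg_nonneg : ∀ k : ℤ, 0 ≤ g k := fun k => by rw [hgdef]; positivity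
  have hg_le_one : ∀ k : ℤ, g k ≤ 1 := fun k => by
    rw [hgdef]
    refine inv_le_one_of_one_le₀ ?_
    nlinarith [abs_nonneg (k:ℝ)]
  have hgsum : Summable g := summable_g
  -- decay at the integers
  have hdec2 : ∀ k : ℤ, ‖c (-(k:ℝ))‖ * (1 + |(k:ℝ)|) ^ (2*m+2) ≤ C := fun k => by
    have := hCd (-(k:ℝ)); rwa [abs_neg] at this
  have hdec1 : ∀ k : ℤ, ‖c (-(k:ℝ))‖ * (1 + |(k:ℝ)|) ^ (m+2) ≤ C := fun k => by
    refine le_trans ?_ (hdec2 k)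
    have h1 : (1 + |(k:ℝ)|) ^ (m+2) ≤ (1 + |(k:ℝ)|) ^ (2*m+2) :=
      pow_le_pow_right₀ (by linarith [abs_nonneg (k:ℝ)]) (by omega)
    exact mul_le_mul_of_nonneg_left h1 (norm_nonneg _)
  have hd_gen : ∀ (e : ℕ), (∀ k : ℤ, ‖c (-(k:ℝ))‖ * (1 + |(k:ℝ)|) ^ (e+2) ≤ C) →
      ∀ k : ℤ, ‖c (-(k:ℝ))‖ * (1 + |(k:ℝ)|) ^ e ≤ C * g k := by
    intro e he k
    have ha : (0:ℝ) < (1 + |(k:ℝ)|) ^ 2 := by positivity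
    have e1 : (1 + |(k:ℝ)|) ^ (e+2) = (1 + |(k:ℝ)|) ^ e * (1 + |(k:ℝ)|) ^ 2 := by ring
    have h2 := he k
    rw [e1, ← mul_assoc] at h2
    calc ‖c (-(k:ℝ))‖ * (1 + |(k:ℝ)|) ^ e ≤ C / ((1 + |(k:ℝ)|) ^ 2) := by
          rw [le_div_iff₀ ha]; exact h2
      _ = C * g k := by rw [hgdef, div_eq_mul_inv]
  have hdm2 := hd_gen (2*m) hdec2
  have hdm1 := hd_gen m hdec1
  -- weights
  set A : ℤ → ℝ := fun k => 1 + |((2 * k : ℤ) : ℝ)| with hAdef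
  have hA1 : ∀ k, (1:ℝ) ≤ A k := fun k => by rw [hAdef]; simp [abs_nonneg]
  have hApos : ∀ k, (0:ℝ) < A k := fun k => lt_of_lt_of_le one_pos (hA1 k)
  have hAsub : ∀ k j : ℤ, A (k - j) ≤ A k * A j := by
    intro k j
    simp only [hAdef]
    push_cast
    rw [mul_sub]
    have h1 : |2*(k:ℝ) - 2*(j:ℝ)| ≤ |2*(k:ℝ)| + |2*(j:ℝ)| := abs_sub _ _
    nlinarith [abs_nonneg (2*(k:ℝ)), abs_nonneg (2*(j:ℝ))]
  have hAk : ∀ k : ℤ, A k ≤ 2 * (1 + |(k:ℝ)|) := fun k => by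
    simp only [hAdef]
    push_cast
    rw [abs_mul]
    rw [show |(2:ℝ)| = 2 from by norm_num]
    linarith [abs_nonneg (k:ℝ)]
  set aV : ℤ → ℝ := fun k => ‖V k‖ / A k ^ m with haVdef
  set bu : ℤ → ℝ := fun k => ‖u k‖ * A k ^ m with hbudef
  have haV_nonneg : ∀ k, 0 ≤ aV k := fun k => by
    rw [haVdef]; positivity
  have hbu_nonneg : ∀ k, 0 ≤ bu k := fun k => by rw [hbudef]; positivity
  have hSa : Summable (fun k => aV k ^ 2) := by
    refine hV.congr fun k => ?_
    rw [haVdef]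
    simp only [wtp, hAdef]
    rw [show 2 * (-(m:ℝ)) = -((2*m : ℕ) : ℝ) from by push_cast; ring]
    rw [Real.rpow_neg (by positivity), Real.rpow_natCast]
    rw [div_pow, ← pow_mul]
    rw [div_eq_mul_inv, mul_comm]
    ring_nf
    rw [Int.cast_abs]
  have hSb : Summable (fun k => bu k ^ 2) := by
    refine hu.congr fun k => ?_
    rw [hbudef]
    simp only [wtp, hAdef]
    rw [show 2 * ((m:ℝ)) = ((2*m : ℕ) : ℝ) from by push_cast; ring]
    rw [Real.rpow_natCast]
    rw [mul_pow, ← pow_mul]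
    ring_nf
    rw [Int.cast_abs]
  have hu2 : Summable (fun k => ‖u k‖ ^ 2) := by
    refine Summable.of_nonneg_of_le (fun k => by positivity) (fun k => ?_) hSb
    rw [hbudef]
    have h1 : (1:ℝ) ≤ A k ^ m := one_le_pow₀ (hA1 k)
    rw [mul_pow]
    have h2 : 1 ≤ (A k ^ m)^2 := by nlinarith
    nlinarith [sq_nonneg (‖u k‖)]
  have hVbound : ∀ l, ‖V l‖ = aV l * A l ^ m := fun l => by
    rw [haVdef]
    field_simp
    rw [mul_div_cancel_right₀ _ (pow_pos (hApos l) m).ne']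
  have hubound : ∀ j, ‖u j‖ = bu j / A j ^ m := fun j => by
    rw [hbudef]
    field_simp
    rw [mul_div_cancel_right₀ _ (pow_pos (hApos j) m).ne']
  have hVu : ∀ k j : ℤ, ‖V (k - j)‖ * ‖u j‖ ≤ A k ^ m * (aV (k-j) * bu j) := by
    intro k j
    have hj : (0:ℝ) < A j ^ m := pow_pos (hApos j) m
    have hAm : A (k-j) ^ m ≤ A k ^ m * A j ^ m := by
      rw [← mul_pow]; exact pow_le_pow_left₀ (hApos _).le (hAsub k j) m
    calc ‖V (k-j)‖ * ‖u j‖ = aV (k-j) * A (k-j) ^ m * (bu j / A j ^ m) := by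
          rw [hVbound, hubound]
      _ ≤ aV (k-j) * (A k ^ m * A j ^ m) * (bu j / A j ^ m) :=
          mul_le_mul_of_nonneg_right (mul_le_mul_of_nonneg_left hAm (haV_nonneg _))
            (div_nonneg (hbu_nonneg _) (pow_nonneg (hApos j).le m))
      _ = A k ^ m * (aV (k-j) * bu j) := by field_simp
  have hprod_sq : ∀ x y : ℝ, 0 ≤ x → 0 ≤ y → x * y ≤ x^2 + y^2 := by
    intro x y hx hy
    nlinarith [sq_nonneg (x - y), mul_nonneg hx hy]
  have hS0 : ∀ k : ℤ, Summable (fun j : ℤ => V (k - j) * u j) := by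
    intro k
    refine Summable.of_norm_bounded (g := fun j => A k ^ m * (aV (k-j)^2 + bu j^2))
      (((hSa.comp_injective sub_right_injective).add hSb).mul_left _) (fun j => ?_)
    rw [norm_mul]
    refine (hVu k j).trans ?_
    exact mul_le_mul_of_nonneg_left (hprod_sq _ _ (haV_nonneg _) (hbu_nonneg _))
      (pow_nonneg (hApos k).le m)
  -- product family bound
  set K : ℝ := 2 ^ m * C with hKdef
  have hK0 : (0:ℝ) ≤ K := by positivity
  set bP : ℤ × ℤ → ℝ := fun p => K * g p.1 * (aV (p.1 - p.2)^2 + bu p.2^2) with hbPdef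
  have hbP_nonneg : ∀ p, 0 ≤ bP p := fun p => by
    rw [hbPdef]
    have := hg_nonneg p.1
    positivity
  have hcAm : ∀ k : ℤ, ‖c (-(k:ℝ))‖ * A k ^ m ≤ K * g k := by
    intro k
    have h1 : A k ^ m ≤ 2 ^ m * (1 + |(k:ℝ)|) ^ m := by
      rw [← mul_pow]
      exact pow_le_pow_left₀ (hApos k).le (hAk k) m
    calc ‖c (-(k:ℝ))‖ * A k ^ m
        ≤ ‖c (-(k:ℝ))‖ * (2 ^ m * (1 + |(k:ℝ)|) ^ m) :=
          mul_le_mul_of_nonneg_left h1 (norm_nonneg _)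
      _ = 2 ^ m * (‖c (-(k:ℝ))‖ * (1 + |(k:ℝ)|) ^ m) := by ring
      _ ≤ 2 ^ m * (C * g k) := mul_le_mul_of_nonneg_left (hdm1 k) (by positivity)
      _ = K * g k := by rw [hKdef]; ring
  have hPbound : ∀ p : ℤ × ℤ, ‖c (-(p.1:ℝ)) * (V (p.1 - p.2) * u p.2)‖ ≤ bP p := by
    rintro ⟨k, j⟩
    rw [norm_mul, norm_mul]
    calc ‖c (-(k:ℝ))‖ * (‖V (k-j)‖ * ‖u j‖)
        ≤ ‖c (-(k:ℝ))‖ * (A k ^ m * (aV (k-j) * bu j)) :=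
          mul_le_mul_of_nonneg_left (hVu k j) (norm_nonneg _)
      _ = (‖c (-(k:ℝ))‖ * A k ^ m) * (aV (k-j) * bu j) := by ring
      _ ≤ (K * g k) * (aV (k-j)^2 + bu j^2) := by
          refine mul_le_mul (hcAm k) (hprod_sq _ _ (haV_nonneg _) (hbu_nonneg _)) ?_ ?_
          · exact mul_nonneg (haV_nonneg _) (hbu_nonneg _)
          · exact mul_nonneg hK0 (hg_nonneg k)
      _ = bP (k, j) := by rw [hbPdef]
  have hbPsum : Summable bP := by
    refine (summable_prod_of_nonneg hbP_nonneg).2 ⟨fun k => ?_, ?_⟩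
    · have s1 : Summable (fun j : ℤ => aV (k - j)^2) := hSa.comp_injective sub_right_injective
      have hsum : Summable (fun j : ℤ => (K * g k) * (aV (k - j)^2 + bu j^2)) :=
        (s1.add hSb).mul_left _
      exact hsum.congr fun j => by simp only [hbPdef]
    · have hval : ∀ k : ℤ, ∑' j, bP (k, j)
          = (K * g k) * ((∑' l, aV l ^ 2) + ∑' j, bu j ^ 2) := by
        intro k
        simp only [hbPdef]
        rw [show (fun j => K * g k * (aV (k - j) ^ 2 + bu j ^ 2))
            = fun j => (K * g k) * (aV (k-j)^2 + bu j^2) from rfl, tsum_mul_left]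
        congr 1
        have s1 : Summable (fun j : ℤ => aV (k - j)^2) := hSa.comp_injective sub_right_injective
        rw [Summable.tsum_add s1 hSb]
        congr 1
        exact (Equiv.subLeft k).tsum_eq (fun l => aV l ^ 2)
      refine Summable.congr ?_ (fun k => (hval k).symm)
      exact (hgsum.mul_left K).mul_right _
  have hPsum : Summable (fun p : ℤ × ℤ => c (-(p.1:ℝ)) * (V (p.1 - p.2) * u p.2)) :=
    Summable.of_norm_bounded hbPsum hPbound
  -- summability of the first part
  have hcplus_nonneg : ∀ k : ℤ, (0:ℝ) ≤ cplus m k := fun k => by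
    rw [cplus]
    exact Even.pow_nonneg (even_two_mul m) _
  have hgsq : Summable (fun k : ℤ => g k ^ 2) := by
    refine Summable.of_nonneg_of_le (fun k => sq_nonneg _) (fun k => ?_) hgsum
    nlinarith [hg_nonneg k, hg_le_one k]
  have hterm1 : Summable (fun k : ℤ => c (-(k:ℝ)) * (((cplus m k : ℝ) : ℂ) * u k)) := by
    refine Summable.of_norm_bounded (g := fun k => (2*Real.pi)^(2*m) * C * (g k ^ 2 + ‖u k‖ ^ 2))
      (((hgsq.add hu2).mul_left _)) (fun k => ?_)
    rw [norm_mul, norm_mul]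
    have hcp : ‖(((cplus m k : ℝ)) : ℂ)‖ = cplus m k := by
      rw [Complex.norm_real, Real.norm_eq_abs, _root_.abs_of_nonneg (hcplus_nonneg k)]
    have hcplt : cplus m k ≤ (2*Real.pi)^(2*m) * (1+|(k:ℝ)|)^(2*m) := by
      have e1 : cplus m k = |2 * Real.pi * (k:ℝ)| ^ (2*m) := by
        simp only [cplus]
        rw [pow_abs, _root_.abs_of_nonneg (Even.pow_nonneg (even_two_mul m) _)]
      rw [e1, abs_mul, _root_.abs_of_nonneg (by positivity : (0:ℝ) ≤ 2*Real.pi), ← mul_pow]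
      refine pow_le_pow_left₀ (by positivity) ?_ _
      have := abs_nonneg (k:ℝ)
      nlinarith [Real.pi_pos]
    calc ‖c (-(k:ℝ))‖ * (‖(((cplus m k : ℝ)) : ℂ)‖ * ‖u k‖)
        = (cplus m k) * ‖c (-(k:ℝ))‖ * ‖u k‖ := by rw [hcp]; ring
      _ ≤ ((2*Real.pi)^(2*m) * (1+|(k:ℝ)|)^(2*m)) * ‖c (-(k:ℝ))‖ * ‖u k‖ := by
          have := mul_le_mul_of_nonneg_right
            (mul_le_mul_of_nonneg_right hcplt (norm_nonneg (c (-(k:ℝ))))) (norm_nonneg (u k))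
          exact this
      _ = (2*Real.pi)^(2*m) * ((‖c (-(k:ℝ))‖ * (1+|(k:ℝ)|)^(2*m)) * ‖u k‖) := by ring
      _ ≤ (2*Real.pi)^(2*m) * ((C * g k) * ‖u k‖) := by
          refine mul_le_mul_of_nonneg_left ?_ (by positivity)
          exact mul_le_mul_of_nonneg_right (hdm2 k) (norm_nonneg _)
      _ = C * (2*Real.pi)^(2*m) * (g k * ‖u k‖) := by ring
      _ ≤ C * (2*Real.pi)^(2*m) * (g k ^ 2 + ‖u k‖ ^ 2) := by
          refine mul_le_mul_of_nonneg_left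
            (hprod_sq _ _ (hg_nonneg k) (norm_nonneg _)) (by positivity)
      _ = (2*Real.pi)^(2*m) * C * (g k ^ 2 + ‖u k‖ ^ 2) := by ring
  -- summability of the second part, fiberwise
  have hfib : ∀ k : ℤ, Summable (fun j : ℤ => c (-(k:ℝ)) * (V (k - j) * u j)) :=
    fun k => (hS0 k).mul_left _
  have hterm2 : Summable (fun k : ℤ => c (-(k:ℝ)) * conv V u k) := by
    have hps := (hPsum.hasSum.prod_fiberwise (fun k => (hfib k).hasSum)).summable
    refine hps.congr fun k => ?_
    rw [tsum_mul_left]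
    rfl
  -- split the sum
  have split : (∑' k : ℤ, 𝓕 h (-(k : ℝ)) * (((cplus m k : ℝ) : ℂ) * u k + conv V u k))
      = (∑' k : ℤ, c (-(k:ℝ)) * (((cplus m k : ℝ) : ℂ) * u k))
        + ∑' k : ℤ, c (-(k:ℝ)) * conv V u k := by
    rw [← Summable.tsum_add hterm1 hterm2]
    exact tsum_congr fun k => mul_add _ _ _
  rw [split]
  -- first part vanishes
  have part1 : (∑' k : ℤ, c (-(k:ℝ)) * (((cplus m k : ℝ) : ℂ) * u k)) = 0 := by
    have hcont2 : Continuous (iteratedDeriv (2*m) h) := cont_iteratedDeriv hh (2*m)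
    have hts2 : tsupport (iteratedDeriv (2*m) h) ⊆ Set.Ioo α β :=
      (tsupport_iteratedDeriv_subset h (2*m)).trans hts
    have T2 := Tst (iteratedDeriv (2*m) h) hcont2 hts2
    have hptw : ∀ k : ℤ, 𝓕 (iteratedDeriv (2*m) h) (-(k:ℝ)) * u k
        = (-1 : ℂ)^m * (c (-(k:ℝ)) * (((cplus m k : ℝ) : ℂ) * u k)) := by
      intro k
      rw [FT_iteratedDeriv hh hcs (2*m) (-(k:ℝ)), smul_eq_mul]
      have e1 : ((2 * (Real.pi:ℂ) * Complex.I * ((-(k:ℝ) : ℝ) : ℂ)) ^ (2*m))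
          = (-1 : ℂ)^m * (((cplus m k : ℝ)) : ℂ) := by
        rw [cplus]
        push_cast
        rw [show (2 * (Real.pi:ℂ) * Complex.I * (-(k:ℂ)))
            = (2 * (Real.pi:ℂ) * (k:ℂ)) * (-Complex.I) from by ring]
        rw [mul_pow]
        rw [show ((-Complex.I) ^ (2*m)) = ((-Complex.I)^2)^m from by rw [← pow_mul]]
        rw [show ((-Complex.I)^2) = -1 from by rw [neg_sq, Complex.I_sq]]
        ring
      rw [e1]
      ring
    have hsum0 : ∑' k : ℤ, (-1 : ℂ)^m * (c (-(k:ℝ)) * (((cplus m k : ℝ) : ℂ) * u k)) = 0 :=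
      (tsum_congr fun k => (hptw k).symm).trans T2
    rw [tsum_mul_left] at hsum0
    rcases mul_eq_zero.1 hsum0 with h0 | h0
    · exact absurd h0 (pow_ne_zero _ (by norm_num))
    · exact h0
  -- second part vanishes
  have part2 : (∑' k : ℤ, c (-(k:ℝ)) * conv V u k) = 0 := by
    have h1 : (∑' k : ℤ, c (-(k:ℝ)) * conv V u k)
        = ∑' p : ℤ × ℤ, c (-(p.1:ℝ)) * (V (p.1 - p.2) * u p.2) := by
      rw [Summable.tsum_prod' hPsum hfib]
      exact tsum_congr fun k => (tsum_mul_left).symm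
    have hq : Summable (fun q : ℤ × ℤ => c (-((q.1 + q.2 : ℤ) : ℝ)) * (V q.1 * u q.2)) := by
      refine (shearEquiv.summable_iff.2 hPsum).congr fun q => ?_
      show c (-(((q.1+q.2, q.2) : ℤ×ℤ).1:ℝ)) * (V ((q.1+q.2, q.2).1 - (q.1+q.2, q.2).2) * u (q.1+q.2, q.2).2) = _
      simp
    have h2 : (∑' p : ℤ × ℤ, c (-(p.1:ℝ)) * (V (p.1 - p.2) * u p.2))
        = ∑' q : ℤ × ℤ, c (-((q.1 + q.2 : ℤ) : ℝ)) * (V q.1 * u q.2) := by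
      rw [← shearEquiv.tsum_eq]
      refine tsum_congr fun q => ?_
      show c (-(((q.1+q.2, q.2) : ℤ×ℤ).1:ℝ)) * (V ((q.1+q.2, q.2).1 - (q.1+q.2, q.2).2) * u (q.1+q.2, q.2).2) = _
      simp
    have hfib2 : ∀ l : ℤ, Summable (fun j : ℤ => c (-((l + j : ℤ) : ℝ)) * (V l * u j)) := by
      intro l
      have hinj : Function.Injective (fun j : ℤ => ((l + j, j) : ℤ × ℤ)) := by
        intro j1 j2 hj
        simpa using congrArg Prod.snd hj
      have := hPsum.comp_injective hinj
      refine this.congr fun j => ?_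
      show c (-(((l+j, j) : ℤ×ℤ).1:ℝ)) * (V ((l+j, j).1 - (l+j, j).2) * u (l+j, j).2) = _
      simp
    have h3 : (∑' q : ℤ × ℤ, c (-((q.1 + q.2 : ℤ) : ℝ)) * (V q.1 * u q.2))
        = ∑' l : ℤ, ∑' j : ℤ, c (-((l + j : ℤ) : ℝ)) * (V l * u j) :=
      Summable.tsum_prod' hq hfib2
    have h4 : ∀ l : ℤ, (∑' j : ℤ, c (-((l + j : ℤ) : ℝ)) * (V l * u j)) = 0 := by
      intro l
      set hl : ℝ → ℂ := fun x => h x * Complex.exp (2 * Real.pi * l * x * Complex.I) with hhl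
      have hlcont : Continuous hl := by
        rw [hhl]
        exact hh.continuous.mul (Complex.continuous_exp.comp ((continuous_const.mul Complex.continuous_ofReal).mul continuous_const))
      have hlts : tsupport hl ⊆ Set.Ioo α β := by
        refine subset_trans (closure_mono ?_) ((closure_minimal (subset_tsupport h) (isClosed_tsupport h)).trans hts)
        exact Function.support_mul_subset_left _ _
      have Tl := Tst hl hlcont hlts
      have hshift : ∀ j : ℤ, 𝓕 hl (-(j:ℝ)) = c (-((l + j : ℤ) : ℝ)) := by
        intro j
        rw [hhl, FT_shift h l (-(j:ℝ))]
        show 𝓕 h (-(j:ℝ) - (l:ℝ)) = 𝓕 h (-((l + j : ℤ) : ℝ))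
        congr 1
        push_cast
        ring
      have hre : (∑' j : ℤ, c (-((l + j : ℤ) : ℝ)) * (V l * u j))
          = V l * ∑' j : ℤ, 𝓕 hl (-(j:ℝ)) * u j := by
        rw [← tsum_mul_left]
        refine tsum_congr fun j => ?_
        rw [hshift j]
        ring
      rw [hre, Tl, mul_zero]
    rw [h1, h2, h3]
    simp only [h4]
    exact tsum_zero
  rw [part1, part2, add_zero]

end Helpers

lemma haar_eq_vol : (volume : Measure (AddCircle (1:ℝ))) = (@haarAddCircle (1:ℝ) _) := by
  rw [AddCircle.volume_eq_smul_haarAddCircle, ENNReal.ofReal_one, one_smul]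

theorem locality (m : ℕ) (hm : 1 ≤ m) (V u w : ℤ → ℂ)
    (hV : Summable fun k : ℤ => wtp (-(m : ℝ)) k * ‖V k‖ ^ 2)
    -- u ∈ H₊^m
    (hu : Summable fun k : ℤ => wtp (m : ℝ) k * ‖u k‖ ^ 2)
    -- w = S₊(V)u = D₊^{2m}u + V·u, and w ∈ L²
    (hw : Summable fun k : ℤ => ‖w k‖ ^ 2)
    (hSu : ∀ k : ℤ, w k = ((cplus m k : ℝ) : ℂ) * u k + conv V u k)
    -- U, W : the realizations of u and S₊u as functions in L²(0,1)
    (U W : Lp ℂ 2 (@haarAddCircle (1 : ℝ) _))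
    (hU : ∀ k : ℤ, fourierCoeff (U : AddCircle (1 : ℝ) → ℂ) k = u k)
    (hW : ∀ k : ℤ, fourierCoeff (W : AddCircle (1 : ℝ) → ℂ) k = w k) :
    ∀ α β : ℝ, 0 ≤ α → β ≤ 1 → α < β →
      (∀ᵐ x : ℝ ∂(volume.restrict (Set.Ioo α β)), U (x : AddCircle (1 : ℝ)) = 0) →
      (∀ᵐ x : ℝ ∂(volume.restrict (Set.Ioo α β)), W (x : AddCircle (1 : ℝ)) = 0) := by
  intro α β hα hβ hαβ hU0
  -- the test-function vanishing property of u
  have Tst : ∀ f : ℝ → ℂ, Continuous f → tsupport f ⊆ Set.Ioo α β →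
      ∑' k : ℤ, 𝓕 f (-(k : ℝ)) * u k = 0 := by
    intro f hf hts
    have e1 := key_integral U hα hβ f hf hts
    have e2 := key_zero U hU0 f hts
    have e3 : ∑' k : ℤ, 𝓕 f (-(k:ℝ)) * fourierCoeff (U : AddCircle (1:ℝ) → ℂ) k = 0 := by
      rw [← e1]; exact e2
    simpa only [hU] using e3
  -- local integrability of x ↦ W x on (α, β)
  have hmp : MeasurePreserving (fun x : ℝ => (x : AddCircle (1:ℝ)))
      (volume.restrict (Set.Ioc 0 1)) (volume : Measure (AddCircle (1:ℝ))) := by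
    have := AddCircle.measurePreserving_mk (1:ℝ) 0
    rwa [zero_add] at this
  have hW1 : AEStronglyMeasurable (W : AddCircle (1:ℝ) → ℂ)
      (volume : Measure (AddCircle (1:ℝ))) := by
    rw [haar_eq_vol]
    exact Lp.aestronglyMeasurable W
  have hWIcirc : Integrable (W : AddCircle (1:ℝ) → ℂ) (volume : Measure (AddCircle (1:ℝ))) := by
    rw [haar_eq_vol]
    exact (Lp.memLp W).integrable (by norm_num)
  have hWint : IntegrableOn (fun x : ℝ => W (x : AddCircle (1:ℝ))) (Set.Ioc 0 1) volume :=
    (hmp.integrable_comp hW1).2 hWIcirc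
  have hsub : Set.Ioo α β ⊆ Set.Ioc (0:ℝ) 1 := fun x hx =>
    ⟨lt_of_le_of_lt hα hx.1, le_trans hx.2.le hβ⟩
  have hWloc : LocallyIntegrableOn (fun x : ℝ => W (x : AddCircle (1:ℝ)))
      (Set.Ioo α β) volume := (hWint.mono_set hsub).locallyIntegrableOn
  -- conclude by testing against smooth compactly supported functions
  refine (ae_restrict_iff' measurableSet_Ioo).2 ?_
  refine IsOpen.ae_eq_zero_of_integral_contDiff_smul_eq_zero isOpen_Ioo hWloc ?_
  intro g hg hgc hgsupp
  -- pass to the complex-valued test function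
  set h : ℝ → ℂ := fun x => (g x : ℂ) with hhdef
  have hh : ContDiff ℝ (⊤ : ℕ∞) h := Complex.ofRealCLM.contDiff.comp hg
  have hs_eq : Function.support h = Function.support g := by
    ext x
    simp [Function.mem_support, hhdef, Complex.ofReal_eq_zero]
  have hsupp_eq : tsupport h = tsupport g := by
    unfold tsupport
    rw [hs_eq]
  have hts_h : tsupport h ⊆ Set.Ioo α β := by rw [hsupp_eq]; exact hgsupp
  have hcont_h : Continuous h := hh.continuous
  -- the integral equals a Fourier-side sum
  have step1 : ∫ x : ℝ, g x • W (x : AddCircle (1:ℝ))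
      = ∫ x in Set.Ioc (0:ℝ) 1, h x * W (x : AddCircle (1:ℝ)) := by
    rw [← setIntegral_eq_integral_of_forall_compl_eq_zero
      (s := Set.Ioc (0:ℝ) 1) (fun x hx => ?_)]
    · refine setIntegral_congr_fun measurableSet_Ioc fun x _ => ?_
      rw [hhdef, Complex.real_smul]
    · have hgx : g x = 0 :=
        image_eq_zero_of_notMem_tsupport fun hc => hx (hsub (hgsupp hc))
      rw [hgx, zero_smul]
  have step2 := key_integral W hα hβ h hcont_h hts_h
  have step3 : (∑' k : ℤ, 𝓕 h (-(k:ℝ)) * fourierCoeff (W : AddCircle (1:ℝ) → ℂ) k)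
      = ∑' k : ℤ, 𝓕 h (-(k:ℝ)) * (((cplus m k : ℝ) : ℂ) * u k + conv V u k) := by
    refine tsum_congr fun k => ?_
    rw [hW k, hSu k]
  rw [step1, step2, step3]
  exact main_tsum m V u hV hu Tst h hh hts_h
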